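/- For τ in the upper half plane, with θ00, θ10, θ01 the Jacobi theta constants, one has the duplication-type identities θ10(τ/2)² = 2·θ00(τ)·θ10(τ) and θ00(τ/2)·θ01(τ/2) = θ01(τ)². -/

import Mathlib

open Complex

noncomputable def theta00 (τ : ℂ) : ℂ := ∑' n : ℤ, Complex.exp (Real.pi * I * τ * (n : ℂ) ^ 2)

noncomputable def theta10 (τ : ℂ) : ℂ :=
  ∑' n : ℤ, Complex.exp (Real.pi * I * τ * ((n : ℂ) + 1 / 2) ^ 2)

noncomputable def theta01 (τ : ℂ) : ℂ :=
  ∑' n : ℤ, (-1 : ℂ) ^ n * Complex.exp (Real.pi * I * τ * (n : ℂ) ^ 2)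

open Real

lemma neg_one_zpow_ite (n : ℤ) : (-1:ℂ)^n = if n % 2 = 0 then 1 else -1 := by
  rcases Int.even_or_odd n with h|h
  · rw [Even.neg_one_zpow h]; simp [Int.even_iff.mp h]
  · rw [Odd.neg_one_zpow h]; rw [Int.odd_iff.mp h]; norm_num

lemma summable_norm_shift {τ : ℂ} (hτ : 0 < τ.im) (c : ℝ) :
    Summable fun n : ℤ => ‖cexp (↑Real.pi * I * τ * ((n:ℂ)+(c:ℂ))^2)‖ := by
  have key : ∀ n : ℤ, ‖cexp (↑Real.pi * I * τ * ((n:ℂ)+(c:ℂ))^2)‖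
      = rexp (-(Real.pi * (τ.im * ((n:ℝ)+c)^2))) := by
    intro n
    have h1 : ((n:ℂ)+(c:ℂ)) = ((((n:ℝ)+c) : ℝ):ℂ) := by push_cast; ring
    rw [h1]
    rw [Complex.norm_exp]
    congr 1
    set x : ℝ := (n:ℝ) + c
    have : (↑Real.pi * I * τ * (x:ℂ)^2) = (((Real.pi * x^2 : ℝ)):ℂ) * τ * I := by
      push_cast; ring
    rw [this, mul_assoc, re_ofReal_mul, mul_I_re]
    ring
  rw [funext key]
  have h := summable_pow_mul_jacobiTheta₂_term_bound (τ.im * |c|) hτ 0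
  simp only [pow_zero, one_mul] at h
  refine h.of_nonneg_of_le (fun n => (Real.exp_pos _).le) (fun n => ?_)
  rw [Real.exp_le_exp]
  have h1 : -(c * n) ≤ |c| * |(n:ℝ)| := by rw [← abs_mul]; exact neg_le_abs _
  have h3 : |(n:ℝ)|^2 = (n:ℝ)^2 := sq_abs _
  have h4 : ((|n|:ℤ):ℝ) = |(n:ℝ)| := by push_cast; ring
  rw [h4]
  have hcore : τ.im * (n:ℝ)^2 - 2*(τ.im*|c|)*|(n:ℝ)| ≤ τ.im * ((n:ℝ)+c)^2 := by
    nlinarith [mul_le_mul_of_nonneg_left h1 hτ.le, mul_nonneg hτ.le (sq_nonneg c)]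
  have := mul_le_mul_of_nonneg_left hcore Real.pi_pos.le
  linarith

def eOdd1 : ℤ × ℤ ≃ ({p : ℤ × ℤ | (p.1 + p.2) % 2 = 0}ᶜ : Set (ℤ × ℤ)) where
  toFun x := ⟨(x.1 + x.2, x.1 - x.2 - 1), by simp [Set.mem_compl_iff]; omega⟩
  invFun y := ((y.1.1 + y.1.2 + 1) / 2, (y.1.1 - y.1.2 - 1) / 2)
  left_inv x := by ext <;> simp <;> omega
  right_inv y := by
    have h := y.2
    simp only [Set.mem_compl_iff, Set.mem_setOf_eq] at h
    ext <;> simp <;> omega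

def eEven1 : ℤ × ℤ ≃ ({p : ℤ × ℤ | (p.1 + p.2) % 2 = 0} : Set (ℤ × ℤ)) where
  toFun x := ⟨(x.2 - x.1, x.1 + x.2), by simp; omega⟩
  invFun y := ((y.1.2 - y.1.1) / 2, (y.1.1 + y.1.2) / 2)
  left_inv x := by ext <;> simp <;> omega
  right_inv y := by
    have h := y.2
    simp only [Set.mem_setOf_eq] at h
    ext <;> simp <;> omega

def eEven2 : ℤ × ℤ ≃ ({p : ℤ × ℤ | (p.1 + p.2) % 2 = 0} : Set (ℤ × ℤ)) where
  toFun x := ⟨(x.1 + x.2, x.1 - x.2), by simp; omega⟩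
  invFun y := ((y.1.1 + y.1.2) / 2, (y.1.1 - y.1.2) / 2)
  left_inv x := by ext <;> simp <;> omega
  right_inv y := by
    have h := y.2
    simp only [Set.mem_setOf_eq] at h
    ext <;> simp <;> omega

def eOdd2 : ℤ × ℤ ≃ ({p : ℤ × ℤ | (p.1 + p.2) % 2 = 0}ᶜ : Set (ℤ × ℤ)) where
  toFun x := ⟨(x.1 + x.2, x.1 - x.2 + 1), by simp [Set.mem_compl_iff]; omega⟩
  invFun y := ((y.1.1 + y.1.2 - 1) / 2, (y.1.1 - y.1.2 + 1) / 2)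
  left_inv x := by ext <;> simp <;> omega
  right_inv y := by
    have h := y.2
    simp only [Set.mem_compl_iff, Set.mem_setOf_eq] at h
    ext <;> simp <;> omega

def eFlip : ℤ × ℤ ≃ ℤ × ℤ where
  toFun x := (x.1, 1 - x.2)
  invFun x := (x.1, 1 - x.2)
  left_inv x := by ext <;> simp
  right_inv x := by ext <;> simp

set_option maxHeartbeats 1000000 in
/-- Duplication-type identities for Jacobi theta constants:
`θ10(τ/2)² = 2 θ00(τ) θ10(τ)` and `θ00(τ/2) θ01(τ/2) = θ01(τ)²`. -/
theorem theta_duplication (τ : ℂ) (hτ : 0 < τ.im) :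
    theta10 (τ / 2) ^ 2 = 2 * theta00 τ * theta10 τ ∧
    theta00 (τ / 2) * theta01 (τ / 2) = theta01 τ ^ 2 := by
  have hτ2 : 0 < (τ/2).im := by
    rw [Complex.div_ofNat_im]
    positivity
  -- summability of norms
  have hs0 : Summable fun n : ℤ => ‖cexp (↑Real.pi * I * τ * (n:ℂ)^2)‖ := by
    have := summable_norm_shift hτ 0
    simpa using this
  have hs0h : Summable fun n : ℤ => ‖cexp (↑Real.pi * I * (τ/2) * (n:ℂ)^2)‖ := by
    have := summable_norm_shift hτ2 0
    simpa using this
  have hsh : Summable fun n : ℤ => ‖cexp (↑Real.pi * I * τ * ((n:ℂ)+1/2)^2)‖ := by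
    have := summable_norm_shift hτ (1/2)
    push_cast at this
    exact this
  have hshh : Summable fun n : ℤ => ‖cexp (↑Real.pi * I * (τ/2) * ((n:ℂ)+1/2)^2)‖ := by
    have := summable_norm_shift hτ2 (1/2)
    push_cast at this
    exact this
  have hs01 : Summable fun n : ℤ => ‖(-1:ℂ)^n * cexp (↑Real.pi * I * τ * (n:ℂ)^2)‖ := by
    refine hs0.congr fun n => ?_
    rw [norm_mul, norm_zpow]
    norm_num
  have hs01h : Summable fun n : ℤ =>
      ‖(-1:ℂ)^n * cexp (↑Real.pi * I * (τ/2) * (n:ℂ)^2)‖ := by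
    refine hs0h.congr fun n => ?_
    rw [norm_mul, norm_zpow]
    norm_num
  constructor
  · -- first identity
    set F : ℤ × ℤ → ℂ :=
      fun p => cexp (↑Real.pi * I * (τ/2) * (((p.1:ℂ)+1/2)^2+((p.2:ℂ)+1/2)^2)) with hF
    have hFsum : Summable F := by
      refine (summable_mul_of_summable_norm hshh hshh).congr fun p => ?_
      rw [← Complex.exp_add]
      congr 1
      ring
    have hprod : theta10 (τ/2)^2 = ∑' p : ℤ × ℤ, F p := by
      rw [theta10, sq, tsum_mul_tsum_of_summable_norm hshh hshh]
      refine tsum_congr fun p => ?_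
      rw [← Complex.exp_add]
      congr 1
      ring
    have hsplit := Summable.tsum_add_tsum_compl (f := F)
      (s := {p : ℤ × ℤ | (p.1 + p.2) % 2 = 0}) (hFsum.subtype _) (hFsum.subtype _)
    have hOdd : (∑' x : ({p : ℤ × ℤ | (p.1 + p.2) % 2 = 0}ᶜ : Set (ℤ × ℤ)), F ↑x)
        = theta00 τ * theta10 τ := by
      rw [← Equiv.tsum_eq eOdd1 (fun x => F ↑x)]
      rw [theta00, theta10, tsum_mul_tsum_of_summable_norm hs0 hsh]
      refine tsum_congr fun x => ?_
      show F (x.1 + x.2, x.1 - x.2 - 1) = _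
      simp only [hF]
      rw [← Complex.exp_add]
      congr 1
      push_cast
      ring
    have hEven : (∑' x : ({p : ℤ × ℤ | (p.1 + p.2) % 2 = 0} : Set (ℤ × ℤ)), F ↑x)
        = theta00 τ * theta10 τ := by
      rw [← Equiv.tsum_eq eEven1 (fun x => F ↑x)]
      rw [theta00, theta10, tsum_mul_tsum_of_summable_norm hs0 hsh]
      refine tsum_congr fun x => ?_
      show F (x.2 - x.1, x.1 + x.2) = _
      simp only [hF]
      rw [← Complex.exp_add]
      congr 1
      push_cast
      ring
    rw [hprod, ← hsplit, hOdd, hEven]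
    ring
  · -- second identity
    set G : ℤ × ℤ → ℂ :=
      fun p => (-1:ℂ)^p.2 * cexp (↑Real.pi * I * (τ/2) * ((p.1:ℂ)^2+(p.2:ℂ)^2)) with hG
    have hGsum : Summable G := by
      refine (summable_mul_of_summable_norm hs0h hs01h).congr fun p => ?_
      simp only [hG]
      rw [mul_left_comm, ← Complex.exp_add]
      congr 2
      ring
    have hprod : theta00 (τ/2) * theta01 (τ/2) = ∑' p : ℤ × ℤ, G p := by
      rw [theta00, theta01, tsum_mul_tsum_of_summable_norm hs0h hs01h]
      refine tsum_congr fun p => ?_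
      simp only [hG]
      rw [mul_left_comm, ← Complex.exp_add]
      congr 2
      ring
    have hsplit := Summable.tsum_add_tsum_compl (f := G)
      (s := {p : ℤ × ℤ | (p.1 + p.2) % 2 = 0}) (hGsum.subtype _) (hGsum.subtype _)
    have hEven : (∑' x : ({p : ℤ × ℤ | (p.1 + p.2) % 2 = 0} : Set (ℤ × ℤ)), G ↑x)
        = theta01 τ ^ 2 := by
      rw [← Equiv.tsum_eq eEven2 (fun x => G ↑x)]
      rw [theta01, sq, tsum_mul_tsum_of_summable_norm hs01 hs01]
      refine tsum_congr fun x => ?_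
      obtain ⟨a, b⟩ := x
      show G (a + b, a - b) = _
      simp only [hG]
      have hsign : (-1:ℂ)^(a-b) = (-1)^a * (-1)^b := by
        simp only [neg_one_zpow_ite]
        split_ifs <;> first | ring1 | (exfalso; omega)
      have harg : (↑Real.pi * I * (τ/2) * (((a+b:ℤ):ℂ)^2+((a-b:ℤ):ℂ)^2))
          = ↑Real.pi * I * τ * (a:ℂ)^2 + ↑Real.pi * I * τ * (b:ℂ)^2 := by
        push_cast
        ring
      rw [hsign, harg, Complex.exp_add]
      ring
    have hOdd : (∑' x : ({p : ℤ × ℤ | (p.1 + p.2) % 2 = 0}ᶜ : Set (ℤ × ℤ)), G ↑x) = 0 := by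
      rw [← Equiv.tsum_eq eOdd2 (fun x => G ↑x)]
      set H : ℤ × ℤ → ℂ := fun x => G (x.1 + x.2, x.1 - x.2 + 1) with hH
      have hHeq : (fun x : ℤ × ℤ => G ↑(eOdd2 x)) = H := rfl
      rw [hHeq]
      have hneg : ∀ x : ℤ × ℤ, H (eFlip x) = - H x := by
        rintro ⟨a, b⟩
        show G (a + (1 - b), a - (1 - b) + 1) = - G (a + b, a - b + 1)
        simp only [hG]
        have harg : (↑Real.pi * I * (τ/2) * (((a+(1-b):ℤ):ℂ)^2+((a-(1-b)+1:ℤ):ℂ)^2))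
            = (↑Real.pi * I * (τ/2) * (((a+b:ℤ):ℂ)^2+((a-b+1:ℤ):ℂ)^2)) := by
          push_cast
          ring
        rw [harg, neg_one_zpow_ite, neg_one_zpow_ite]
        split_ifs <;> first | ring1 | (exfalso; omega)
      have h1 : ∑' x, H x = - ∑' x, H x := by
        conv_lhs => rw [← Equiv.tsum_eq eFlip H]
        rw [funext hneg, tsum_neg]
      have h2 : (2:ℂ) * ∑' x, H x = 0 := by linear_combination h1
      exact (mul_eq_zero.mp h2).resolve_left two_ne_zero
    rw [hprod, ← hsplit, hEven, hOdd]
    ring
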